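/- Let σ : ℝ^d → ℝ^{d×m} satisfy |σ(x)|² ≤ L (1 + |x|)^{ρ+2} for all x, with L > 0 and ρ ≥ 1. For n ∈ ℕ define σ^n(x) := σ(x) / (1 + n^{-1}|x|^{2ρ}). Then there exists K > 0, independent of n, such that |σ^n(x)|² ≤ min( K n^{1/2} (1 + |x|²), |σ(x)|² ) for all x ∈ ℝ^d and all n ≥ 1. -/

import Mathlib

private lemma stmt8_aux (t u : ℝ) (ht : 1 ≤ t) (hu : 0 ≤ u) :
    t ^ 3 * (1 + u) ≤ 2 * (t ^ 2 + u ^ 2) ^ 2 := by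
  have ht0 : (0:ℝ) < t := by linarith
  have ht34 : t ^ 3 ≤ t ^ 4 := pow_le_pow_right₀ ht (by norm_num)
  nlinarith [ht34, sq_nonneg (t ^ 2 - t * u),
    mul_nonneg (mul_nonneg ht0.le ht0.le) (mul_nonneg hu hu),
    sq_nonneg (t * u), sq_nonneg (u ^ 2)]

set_option maxHeartbeats 1000000 in
/-- Bound on the tamed diffusion coefficient `σⁿ(x) = σ(x)/(1 + n⁻¹|x|^{2ρ})`. -/
theorem stmt8 {d m : ℕ}
    (σ : EuclideanSpace ℝ (Fin d) → EuclideanSpace ℝ (Fin d × Fin m))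
    (L ρ : ℝ) (hL : 0 < L) (hρ : 1 ≤ ρ)
    (hσ : ∀ x : EuclideanSpace ℝ (Fin d), ‖σ x‖ ^ 2 ≤ L * (1 + ‖x‖) ^ (ρ + 2)) :
    ∃ K > 0, ∀ (n : ℕ), 1 ≤ n → ∀ x : EuclideanSpace ℝ (Fin d),
      ‖(1 + (n : ℝ)⁻¹ * ‖x‖ ^ (2 * ρ))⁻¹ • σ x‖ ^ 2
        ≤ min (K * (n : ℝ) ^ ((1 : ℝ) / 2) * (1 + ‖x‖ ^ 2)) (‖σ x‖ ^ 2) := by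
  refine ⟨L * 2 ^ (ρ + 3), by positivity, ?_⟩
  intro n hn x
  have hr0 : (0:ℝ) ≤ ‖x‖ := norm_nonneg x
  set r : ℝ := ‖x‖ with hrdef
  have hn1 : (1:ℝ) ≤ (n:ℝ) := by exact_mod_cast hn
  have hn0 : (0:ℝ) < (n:ℝ) := by linarith
  set t : ℝ := (n:ℝ) ^ ((1:ℝ)/2) with htdef
  have ht1 : (1:ℝ) ≤ t := Real.one_le_rpow hn1 (by norm_num)
  have ht0 : (0:ℝ) < t := by linarith
  have ht2 : t ^ 2 = (n:ℝ) := by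
    rw [htdef, ← Real.rpow_natCast ((n:ℝ) ^ ((1:ℝ)/2)) 2, ← Real.rpow_mul hn0.le]
    norm_num
  set u : ℝ := r ^ ρ with hudef
  have hu0 : (0:ℝ) ≤ u := Real.rpow_nonneg hr0 ρ
  have hru : r ^ (2 * ρ) = u ^ 2 := by
    rw [hudef, mul_comm, Real.rpow_mul hr0, Real.rpow_two]
  have hrρ2 : r ^ (ρ + 2) = u * r ^ 2 := by
    rw [Real.rpow_add' hr0 (by linarith), hudef, Real.rpow_two]
  set c : ℝ := 1 + (n:ℝ)⁻¹ * r ^ (2 * ρ) with hcdef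
  have hs0 : (0:ℝ) ≤ (n:ℝ)⁻¹ * r ^ (2 * ρ) := by positivity
  have hc1 : (1:ℝ) ≤ c := by rw [hcdef]; linarith
  have hc0 : (0:ℝ) < c := by linarith
  have hcn : c * (n:ℝ) = (n:ℝ) + u ^ 2 := by
    rw [hcdef, hru]; field_simp
  have hnorm : ‖c⁻¹ • σ x‖ ^ 2 = (c⁻¹) ^ 2 * ‖σ x‖ ^ 2 := by
    rw [norm_smul, Real.norm_eq_abs, abs_of_pos (inv_pos.mpr hc0), mul_pow]
  have hS0 : (0:ℝ) ≤ ‖σ x‖ ^ 2 := sq_nonneg _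
  rw [hnorm, le_min_iff]
  constructor
  · -- main bound
    -- step 1 : (1+r)^(ρ+2) ≤ 2^(ρ+2) * (1 + u * r^2)
    have hM : (1:ℝ) + r ≤ 2 * max 1 r := by
      have := le_max_left (1:ℝ) r
      have := le_max_right (1:ℝ) r
      linarith
    have hM0 : (0:ℝ) ≤ max 1 r := le_trans zero_le_one (le_max_left 1 r)
    have hMpow : (max 1 r) ^ (ρ + 2) ≤ 1 + u * r ^ 2 := by
      rcases le_total r 1 with h | h
      · rw [max_eq_left h, Real.one_rpow]
        nlinarith [mul_nonneg hu0 (sq_nonneg r)]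
      · rw [max_eq_right h, hrρ2]
        nlinarith [mul_nonneg hu0 (sq_nonneg r)]
    have hstep1 : (1 + r) ^ (ρ + 2) ≤ 2 ^ (ρ + 2) * (1 + u * r ^ 2) := by
      calc (1 + r) ^ (ρ + 2) ≤ (2 * max 1 r) ^ (ρ + 2) :=
            Real.rpow_le_rpow (by linarith) hM (by linarith)
        _ = 2 ^ (ρ + 2) * (max 1 r) ^ (ρ + 2) :=
            Real.mul_rpow (by norm_num) hM0
        _ ≤ 2 ^ (ρ + 2) * (1 + u * r ^ 2) := by
            have h2 : (0:ℝ) ≤ (2:ℝ) ^ (ρ + 2) := (Real.rpow_pos_of_pos two_pos _).le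
            exact mul_le_mul_of_nonneg_left hMpow h2
    -- step 2 : 1 + u ≤ 2 * t * c ^ 2
    have hkey : 1 + u ≤ 2 * t * c ^ 2 := by
      have h4 : t ^ 4 * c ^ 2 = ((n:ℝ) + u ^ 2) ^ 2 := by
        rw [← hcn, mul_pow, ← ht2]; ring
      have hgoal : t ^ 3 * (1 + u) ≤ 2 * ((n:ℝ) + u ^ 2) ^ 2 := by
        rw [← ht2]; exact stmt8_aux t u ht1 hu0
      have ht3 : (0:ℝ) < t ^ 3 := by positivity
      rw [← mul_le_mul_iff_right₀ ht3]
      calc t ^ 3 * (1 + u) ≤ 2 * ((n:ℝ) + u ^ 2) ^ 2 := hgoal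
        _ = 2 * (t ^ 4 * c ^ 2) := by rw [h4]
        _ = t ^ 3 * (2 * t * c ^ 2) := by ring
    -- step 3 : combine
    have h1ur : 1 + u * r ^ 2 ≤ (1 + r ^ 2) * (1 + u) := by
      have hexp : (1 + r ^ 2) * (1 + u) = 1 + u * r ^ 2 + (u + r ^ 2) := by ring
      have hpos : (0:ℝ) ≤ u + r ^ 2 := by positivity
      linarith
    have hmain : ‖σ x‖ ^ 2 ≤ L * 2 ^ (ρ + 3) * t * (1 + r ^ 2) * c ^ 2 := by
      have h23 : (2:ℝ) ^ (ρ + 3) = 2 ^ (ρ + 2) * 2 := by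
        rw [← Real.rpow_add_one (by norm_num : (2:ℝ) ≠ 0) (ρ + 2)]; ring_nf
      have h2 : (0:ℝ) < (2:ℝ) ^ (ρ + 2) := Real.rpow_pos_of_pos two_pos _
      calc ‖σ x‖ ^ 2 ≤ L * (1 + r) ^ (ρ + 2) := hσ x
        _ ≤ L * (2 ^ (ρ + 2) * (1 + u * r ^ 2)) :=
            mul_le_mul_of_nonneg_left hstep1 hL.le
        _ ≤ L * (2 ^ (ρ + 2) * ((1 + r ^ 2) * (1 + u))) :=
            mul_le_mul_of_nonneg_left (mul_le_mul_of_nonneg_left h1ur h2.le) hL.le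
        _ ≤ L * (2 ^ (ρ + 2) * ((1 + r ^ 2) * (2 * t * c ^ 2))) := by
            have hr2 : (0:ℝ) ≤ 1 + r ^ 2 := by positivity
            exact mul_le_mul_of_nonneg_left (mul_le_mul_of_nonneg_left
              (mul_le_mul_of_nonneg_left hkey hr2) h2.le) hL.le
        _ = L * 2 ^ (ρ + 3) * t * (1 + r ^ 2) * c ^ 2 := by rw [h23]; ring
    have hcinv : (c⁻¹) ^ 2 * c ^ 2 = 1 := by
      rw [← mul_pow, inv_mul_cancel₀ hc0.ne']; norm_num
    calc (c⁻¹) ^ 2 * ‖σ x‖ ^ 2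
        ≤ (c⁻¹) ^ 2 * (L * 2 ^ (ρ + 3) * t * (1 + r ^ 2) * c ^ 2) :=
          mul_le_mul_of_nonneg_left hmain (by positivity)
      _ = L * 2 ^ (ρ + 3) * t * (1 + r ^ 2) * ((c⁻¹) ^ 2 * c ^ 2) := by ring
      _ = L * 2 ^ (ρ + 3) * t * (1 + r ^ 2) := by rw [hcinv, mul_one]
  · have h1 : (c⁻¹) ^ 2 ≤ 1 := by
      have : c⁻¹ ≤ 1 := inv_le_one_of_one_le₀ hc1
      nlinarith [inv_pos.mpr hc0]
    calc (c⁻¹) ^ 2 * ‖σ x‖ ^ 2 ≤ 1 * ‖σ x‖ ^ 2 :=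
          mul_le_mul_of_nonneg_right h1 hS0
      _ = ‖σ x‖ ^ 2 := one_mul _
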